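/- Let R be a linearly ordered exponential field satisfying the extreme value scheme for exponential terms (every term attains a maximum on every closed segment), with exp(1) = 2. Then exp(x) ≥ x for all x ≥ 0 in R. -/

import Mathlib

/-- In an exponential field satisfying the extreme value property for the term
`x - exp x` on closed segments, with `exp 1 = 2` and `exp n = 2^n ≥ n + 1` for
standard naturals, one has `exp x ≥ x` for all `x ≥ 0`. -/
theorem stmt10 {R : Type*} [Field R] [LinearOrder R] [IsStrictOrderedRing R] (exp : R → R)
    (hpos : ∀ x, 0 < exp x) (hmono : StrictMono exp)
    (hadd : ∀ x y, exp (x + y) = exp x * exp y)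
    (hsurj : ∀ z : R, 0 < z → ∃ x, exp x = z)
    (hone : exp 1 = 2)
    (hmax : ∀ u v : R, u ≤ v → ∃ z ∈ Set.Icc u v, ∀ w ∈ Set.Icc u v,
      w - exp w ≤ z - exp z)
    (hnat : ∀ n : ℕ, (n : R) + 1 ≤ exp (n : R)) :
    ∀ x : R, 0 ≤ x → x ≤ exp x := by
  have h0 : exp 0 = 1 := by
    have h := hadd 0 0
    simp only [add_zero] at h
    have := hpos 0
    nlinarith
  intro x hx
  by_contra hlt
  push_neg at hlt
  obtain ⟨z, hz, hzmax⟩ := hmax 0 x hx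
  have hxz : x - exp x ≤ z - exp z := hzmax x ⟨hx, le_refl x⟩
  have hzpos : 0 < z - exp z := lt_of_lt_of_le (by linarith) hxz
  have hez : (1 : R) ≤ exp z := by
    have := hmono.le_iff_le.mpr hz.1
    rwa [h0] at this
  have hz1 : 1 < z := by linarith
  have hmem : z - 1 ∈ Set.Icc (0:R) x := ⟨by linarith, by linarith [hz.2]⟩
  have hkey := hzmax (z - 1) hmem
  have hsplit : exp z = exp (z - 1) * 2 := by
    have := hadd (z - 1) 1
    rw [hone] at this
    simpa using this
  have hle1 : exp (z - 1) ≤ 1 := by nlinarith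
  have : z - 1 ≤ 0 := by
    by_contra hc
    push_neg at hc
    have := hmono hc
    rw [h0] at this
    linarith
  linarith
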